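/- For any ball B ∈ ℬ and function f ∈ L^r(X, 𝕌) one has ⟨f⟩*_{#,B} ≤ inf_{x ∈ B} 𝓜_# f(x) ≤ C ⟨f⟩*_{#,B} for an admissible constant C, where 𝓜_# f(x) = sup_{B ∋ x} ⟨f⟩_{#,B} is the sharp maximal function. -/

import Mathlib

open MeasureTheory Set ENNReal NNReal

/-- A ball-basis on a measure space `(X, μ)`: a family of measurable sets of positive
finite measure satisfying conditions B1)-B4) of Karagulyan. -/
structure BallBasis (X : Type*) [MeasurableSpace X] (μ : Measure X) where
  balls : Set (Set X)
  K : ℝ≥0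
  K_pos : 0 < K
  measurableSet : ∀ B ∈ balls, MeasurableSet B
  measure_pos : ∀ B ∈ balls, 0 < μ B
  measure_lt_top : ∀ B ∈ balls, μ B < ∞
  exists_ball : ∀ x y : X, ∃ B ∈ balls, x ∈ B ∧ y ∈ B
  approx : ∀ E : Set X, MeasurableSet E → ∀ ε : ℝ≥0∞, 0 < ε →
      ∃ Bs : ℕ → Set X, (∀ k, Bs k ∈ balls) ∧ μ (symmDiff E (⋃ k, Bs k)) < ε
  hull : Set X → Set X
  hull_mem : ∀ B ∈ balls, hull B ∈ balls
  star_subset_hull : ∀ B ∈ balls,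
      (⋃₀ {A | A ∈ balls ∧ μ A ≤ 2 * μ B ∧ (A ∩ B).Nonempty}) ⊆ hull B
  measure_hull_le : ∀ B ∈ balls, μ (hull B) ≤ (K : ℝ≥0∞) * μ B

namespace BallBasis

variable {X : Type*} [MeasurableSpace X] {μ : Measure X}

/-- `B* = ⋃ {A ∈ ℬ : μ A ≤ 2 μ B, A ∩ B ≠ ∅}`. -/
def star (ℬ : BallBasis X μ) (B : Set X) : Set X :=
  ⋃₀ {A | A ∈ ℬ.balls ∧ μ A ≤ 2 * μ B ∧ (A ∩ B).Nonempty}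

/-- The doubling condition for a ball-basis, with doubling constant `η`. -/
def Doubling (ℬ : BallBasis X μ) (η : ℝ≥0) : Prop :=
  ∀ B ∈ ℬ.balls, ℬ.star B ≠ univ →
    ∃ B' ∈ ℬ.balls, B ⊂ B' ∧ μ B' ≤ (η : ℝ≥0∞) * μ B

end BallBasis

section Sharp

variable {X : Type*} [MeasurableSpace X] {μ : Measure X}
variable {𝕌 : Type*} [NormedAddCommGroup 𝕌] [NormedSpace ℝ 𝕌]

/-- The average `f_A = μ(A)⁻¹ ∫_A f`. -/
noncomputable def ballAvg (μ : Measure X) (A : Set X) (f : X → 𝕌) : 𝕌 :=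
  (μ A).toReal⁻¹ • ∫ x in A, f x ∂μ

/-- The `L^r` mean oscillation `⟨f⟩_{#,B} = (μ(B)⁻¹ ∫_B ‖f - f_B‖^r)^{1/r}`. -/
noncomputable def sharpAvg (μ : Measure X) (r : ℝ) (f : X → 𝕌) (B : Set X) : ℝ≥0∞ :=
  ((∫⁻ x in B, (‖f x - ballAvg μ B f‖₊ : ℝ≥0∞) ^ r ∂μ) / μ B) ^ (1 / r)

/-- `⟨f⟩*_{#,B} = sup_{A ∈ ℬ, A ⊇ B} ⟨f⟩_{#,A}`. -/
noncomputable def sharpStar {μ : Measure X} (ℬ : BallBasis X μ) (r : ℝ)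
    (f : X → 𝕌) (B : Set X) : ℝ≥0∞ :=
  ⨆ A ∈ {A | A ∈ ℬ.balls ∧ B ⊆ A}, sharpAvg μ r f A

/-- The sharp maximal function `𝓜_# f(x) = sup_{B ∋ x} ⟨f⟩_{#,B}`. -/
noncomputable def sharpMax {μ : Measure X} (ℬ : BallBasis X μ) (r : ℝ)
    (f : X → 𝕌) (x : X) : ℝ≥0∞ :=
  ⨆ B ∈ {B | B ∈ ℬ.balls ∧ x ∈ B}, sharpAvg μ r f B

end Sharp

section helpers

variable {X : Type*} [MeasurableSpace X] {μ : Measure X}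
variable {𝕌 : Type*} [NormedAddCommGroup 𝕌] [NormedSpace ℝ 𝕌] [CompleteSpace 𝕌]

lemma rpow_inv_le_aux {x W : ℝ≥0∞} {r : ℝ} (hr0 : 0 < r) (h : x ^ (1/r) ≤ W) : x ≤ W ^ r := by
  have h2 := ENNReal.rpow_le_rpow h hr0.le
  rwa [← ENNReal.rpow_mul, one_div, inv_mul_cancel₀ hr0.ne', ENNReal.rpow_one] at h2

lemma avg_norm_rpow_bound {r : ℝ} (hr : 1 ≤ r) {A : Set X} (h0 : μ A ≠ 0) (hfin : μ A ≠ ∞)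
    {f : X → 𝕌} (hf : IntegrableOn f A μ) (c : 𝕌) :
    (‖ballAvg μ A f - c‖₊ : ℝ≥0∞) ^ r * μ A ≤ ∫⁻ y in A, (‖f y - c‖₊ : ℝ≥0∞) ^ r ∂μ := by
  have hr0 : (0:ℝ) < r := lt_of_lt_of_le one_pos hr
  have hconst : IntegrableOn (fun _ : X => c) A μ :=
    integrableOn_const hfin
  have hfc : IntegrableOn (fun y => f y - c) A μ := hf.sub hconst
  set L : ℝ≥0∞ := ∫⁻ y in A, (‖f y - c‖₊ : ℝ≥0∞) ∂μ with hL
  set J : ℝ≥0∞ := ∫⁻ y in A, (‖f y - c‖₊ : ℝ≥0∞) ^ r ∂μ with hJ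
  have ht : (0:ℝ) < (μ A).toReal := ENNReal.toReal_pos h0 hfin
  -- step 1 : the norm of the average difference is bounded by L / μ A
  have havg : ballAvg μ A f - c = (μ A).toReal⁻¹ • ∫ y in A, (f y - c) ∂μ := by
    rw [integral_sub hf hconst, setIntegral_const, measureReal_def, smul_sub, smul_smul,
      inv_mul_cancel₀ ht.ne', one_smul, ballAvg]
  have hnorm : ‖ballAvg μ A f - c‖ ≤ (μ A).toReal⁻¹ * ∫ y in A, ‖f y - c‖ ∂μ := by
    rw [havg, norm_smul, norm_inv, Real.norm_of_nonneg ht.le]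
    gcongr
    exact norm_integral_le_integral_norm _
  have step1 : (‖ballAvg μ A f - c‖₊ : ℝ≥0∞) ≤ L * (μ A)⁻¹ := by
    have h1 : (‖ballAvg μ A f - c‖₊ : ℝ≥0∞) = ENNReal.ofReal ‖ballAvg μ A f - c‖ :=
      (ofReal_norm_eq_enorm _).symm
    rw [h1]
    calc ENNReal.ofReal ‖ballAvg μ A f - c‖
        ≤ ENNReal.ofReal ((μ A).toReal⁻¹ * ∫ y in A, ‖f y - c‖ ∂μ) :=
          ENNReal.ofReal_le_ofReal hnorm
      _ = ENNReal.ofReal ((μ A).toReal⁻¹) * ENNReal.ofReal (∫ y in A, ‖f y - c‖ ∂μ) :=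
          ENNReal.ofReal_mul (by positivity)
      _ = (μ A)⁻¹ * L := by
          rw [ENNReal.ofReal_inv_of_pos ht, ENNReal.ofReal_toReal hfin]
          exact congrArg _ (ofReal_integral_norm_eq_lintegral_enorm hfc)
      _ = L * (μ A)⁻¹ := mul_comm _ _
  -- step 2 : Hölder
  have step2 : L ≤ J ^ (1/r) * μ A ^ (1 - 1/r) := by
    have hq0 : ENNReal.ofReal r ≠ 0 := by
      simp [ENNReal.ofReal_eq_zero, not_le, hr0]
    have hq1 : (1:ℝ≥0∞) ≤ ENNReal.ofReal r := ENNReal.one_le_ofReal.2 hr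
    have h := eLpNorm_le_eLpNorm_mul_rpow_measure_univ (μ := μ.restrict A)
      (p := 1) (q := ENNReal.ofReal r) hq1 hfc.aestronglyMeasurable
    rw [eLpNorm_one_eq_lintegral_enorm,
      eLpNorm_eq_lintegral_rpow_enorm_toReal hq0 ENNReal.ofReal_ne_top,
      ENNReal.toReal_ofReal hr0.le, Measure.restrict_apply_univ] at h
    simp at h
    simp only [one_div]
    exact h
  -- combine
  have step3 : (‖ballAvg μ A f - c‖₊ : ℝ≥0∞) ≤ J ^ (1/r) * μ A ^ (-(1/r)) := by
    refine step1.trans ?_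
    calc L * (μ A)⁻¹ ≤ (J ^ (1/r) * μ A ^ (1 - 1/r)) * (μ A)⁻¹ := by gcongr
      _ = J ^ (1/r) * (μ A ^ (1 - 1/r) * μ A ^ (-1 : ℝ)) := by
          rw [ENNReal.rpow_neg_one, mul_assoc]
      _ = J ^ (1/r) * μ A ^ (-(1/r)) := by
          rw [← ENNReal.rpow_add _ _ h0 hfin]
          ring_nf
  calc (‖ballAvg μ A f - c‖₊ : ℝ≥0∞) ^ r * μ A
      ≤ (J ^ (1/r) * μ A ^ (-(1/r))) ^ r * μ A :=
        mul_le_mul_left (ENNReal.rpow_le_rpow step3 hr0.le) _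
    _ = J * (μ A)⁻¹ * μ A := by
        have h1 : (1/r) * r = 1 := by field_simp
        have h2 : (-(1/r)) * r = -1 := by field_simp
        rw [ENNReal.mul_rpow_of_nonneg _ _ hr0.le, ← ENNReal.rpow_mul, ← ENNReal.rpow_mul,
          h1, h2, ENNReal.rpow_one, ENNReal.rpow_neg_one]
    _ = J := by rw [mul_assoc, ENNReal.inv_mul_cancel h0 hfin, mul_one]

lemma osc_bound {r : ℝ} (hr : 1 ≤ r) {A : Set X} (h0 : μ A ≠ 0) (hfin : μ A ≠ ∞)
    {f : X → 𝕌} (hf : IntegrableOn f A μ) (c : 𝕌) :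
    ∫⁻ y in A, (‖f y - ballAvg μ A f‖₊ : ℝ≥0∞) ^ r ∂μ
      ≤ 2 ^ (r + 1) * ∫⁻ y in A, (‖f y - c‖₊ : ℝ≥0∞) ^ r ∂μ := by
  have hr0 : (0:ℝ) < r := lt_of_lt_of_le one_pos hr
  set J : ℝ≥0∞ := ∫⁻ y in A, (‖f y - c‖₊ : ℝ≥0∞) ^ r ∂μ with hJ
  have hpt : ∀ y, (‖f y - ballAvg μ A f‖₊ : ℝ≥0∞) ^ r
      ≤ 2 ^ r * ((‖f y - c‖₊ : ℝ≥0∞) ^ r + ((‖ballAvg μ A f - c‖₊ : ℝ≥0∞)) ^ r) := by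
    intro y
    have htri : (‖f y - ballAvg μ A f‖₊ : ℝ≥0∞) ≤ (‖f y - c‖₊ : ℝ≥0∞) + ((‖ballAvg μ A f - c‖₊ : ℝ≥0∞)) := by
      have he : f y - ballAvg μ A f = (f y - c) - (ballAvg μ A f - c) := by abel
      rw [he]
      exact_mod_cast nnnorm_sub_le (f y - c) (ballAvg μ A f - c)
    set a : ℝ≥0∞ := (‖f y - c‖₊ : ℝ≥0∞)
    calc (‖f y - ballAvg μ A f‖₊ : ℝ≥0∞) ^ r ≤ (a + ((‖ballAvg μ A f - c‖₊ : ℝ≥0∞))) ^ r :=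
          ENNReal.rpow_le_rpow htri hr0.le
      _ ≤ (2 * max a ((‖ballAvg μ A f - c‖₊ : ℝ≥0∞))) ^ r := by
          refine ENNReal.rpow_le_rpow ?_ hr0.le
          rw [two_mul]
          exact add_le_add (le_max_left _ _) (le_max_right _ _)
      _ = 2 ^ r * (max a ((‖ballAvg μ A f - c‖₊ : ℝ≥0∞))) ^ r := ENNReal.mul_rpow_of_nonneg _ _ hr0.le
      _ ≤ 2 ^ r * (a ^ r + ((‖ballAvg μ A f - c‖₊ : ℝ≥0∞)) ^ r) := by
          gcongr
          rcases max_cases a ((‖ballAvg μ A f - c‖₊ : ℝ≥0∞)) with ⟨h1, _⟩ | ⟨h1, _⟩ <;> rw [h1]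
          · exact le_add_right le_rfl
          · exact le_add_left le_rfl
  calc ∫⁻ y in A, (‖f y - ballAvg μ A f‖₊ : ℝ≥0∞) ^ r ∂μ
      ≤ ∫⁻ y in A, 2 ^ r * ((‖f y - c‖₊ : ℝ≥0∞) ^ r + ((‖ballAvg μ A f - c‖₊ : ℝ≥0∞)) ^ r) ∂μ :=
        lintegral_mono fun y => hpt y
    _ = 2 ^ r * (J + ((‖ballAvg μ A f - c‖₊ : ℝ≥0∞)) ^ r * μ A) := by
        rw [lintegral_const_mul' _ _ (by simp : (2:ℝ≥0∞) ^ r ≠ ∞),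
          lintegral_add_right _ measurable_const, setLIntegral_const]
    _ ≤ 2 ^ r * (J + J) := by
        gcongr
        exact avg_norm_rpow_bound hr h0 hfin hf c
    _ = 2 ^ (r + 1) * J := by
        rw [ENNReal.rpow_add _ _ (by norm_num) (by norm_num), ENNReal.rpow_one]
        ring

end helpers

theorem sharpStar_le_inf_sharpMax {X : Type*} [MeasurableSpace X] {μ : Measure X}
    (ℬ : BallBasis X μ) {𝕌 : Type*} [NormedAddCommGroup 𝕌] [NormedSpace ℝ 𝕌]
    [CompleteSpace 𝕌] (r : ℝ) (hr : 1 ≤ r) :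
    ∃ C : ℝ≥0, 0 < C ∧ ∀ f : X → 𝕌, (∀ G ∈ ℬ.balls, IntegrableOn f G μ) →
      ∀ B ∈ ℬ.balls,
        sharpStar ℬ r f B ≤ (⨅ x ∈ B, sharpMax ℬ r f x) ∧
        (⨅ x ∈ B, sharpMax ℬ r f x) ≤ (C : ℝ≥0∞) * sharpStar ℬ r f B := by
  have hKpos := ℬ.K_pos
  refine ⟨8 * ℬ.K ^ 2, by positivity, ?_⟩
  intro f hf B hB
  have hr0 : (0:ℝ) < r := lt_of_lt_of_le one_pos hr
  have hB0 : μ B ≠ 0 := (ℬ.measure_pos B hB).ne'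
  have hBfin : μ B ≠ ∞ := (ℬ.measure_lt_top B hB).ne
  set W := sharpStar ℬ r f B with hWdef
  -- stars are inside hulls
  have hstar : ∀ A ∈ ℬ.balls, ∀ A' ∈ ℬ.balls, μ A' ≤ 2 * μ A → (A' ∩ A).Nonempty →
      A' ⊆ ℬ.hull A := by
    intro A hA A' hA' hle hne
    refine (subset_sUnion_of_mem ?_).trans (ℬ.star_subset_hull A hA)
    exact ⟨hA', hle, hne⟩
  have hself : ∀ A ∈ ℬ.balls, A ⊆ ℬ.hull A := fun A hA =>
    hstar A hA A hA (le_mul_of_one_le_left zero_le one_le_two)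
      (by rw [inter_self]; exact nonempty_of_measure_ne_zero (ℬ.measure_pos A hA).ne')
  set H := ℬ.hull B with hHdef
  have hBH : B ⊆ H := hself B hB
  have hHmem : H ∈ ℬ.balls := ℬ.hull_mem B hB
  have hH0 : μ H ≠ 0 := (ℬ.measure_pos H hHmem).ne'
  have hHfin : μ H ≠ ∞ := (ℬ.measure_lt_top H hHmem).ne
  have hK1 : (1:ℝ≥0∞) ≤ (ℬ.K : ℝ≥0∞) := by
    have h1 : (1:ℝ≥0∞) * μ B ≤ (ℬ.K:ℝ≥0∞) * μ B := by
      rw [one_mul]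
      exact le_trans (measure_mono hBH) (ℬ.measure_hull_le B hB)
    exact (ENNReal.mul_le_mul_iff_left hB0 hBfin).1 h1
  have hK2 : (1:ℝ≥0∞) ≤ (ℬ.K:ℝ≥0∞) ^ 2 := by
    calc (1:ℝ≥0∞) = 1 * 1 := (one_mul 1).symm
      _ ≤ (ℬ.K:ℝ≥0∞) * (ℬ.K:ℝ≥0∞) := mul_le_mul' hK1 hK1
      _ = (ℬ.K:ℝ≥0∞) ^ 2 := (sq _).symm
  constructor
  · -- first inequality
    refine le_iInf₂ fun x hx => ?_
    rw [hWdef]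
    unfold sharpStar sharpMax
    refine iSup₂_le fun A hA => ?_
    exact le_biSup _ (⟨hA.1, hA.2 hx⟩ : A ∈ {A | A ∈ ℬ.balls ∧ x ∈ A})
  · -- second inequality
    set C : ℝ≥0∞ := ((8 * ℬ.K ^ 2 : ℝ≥0) : ℝ≥0∞) with hCdef
    have hC8 : C = 8 * (ℬ.K:ℝ≥0∞) ^ 2 := by rw [hCdef]; push_cast; ring
    by_cases hWtop : W = ∞
    · have h1 : C * W = ∞ := by
        rw [hWtop]
        refine ENNReal.mul_top ?_
        rw [hCdef]
        exact_mod_cast (mul_pos (by norm_num) (pow_pos hKpos 2) : (0:ℝ≥0) < 8 * ℬ.K ^ 2).ne'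
      rw [h1]; exact le_top
    have hWfin : W ≠ ∞ := hWtop
    have hsharp_le : ∀ A ∈ ℬ.balls, B ⊆ A →
        (∫⁻ y in A, (‖f y - ballAvg μ A f‖₊:ℝ≥0∞) ^ r ∂μ) ≤ W ^ r * μ A := by
      intro A hA hBA
      have h1 : sharpAvg μ r f A ≤ W :=
        le_biSup _ (⟨hA, hBA⟩ : A ∈ {A | A ∈ ℬ.balls ∧ B ⊆ A})
      rw [sharpAvg] at h1
      have h2 := rpow_inv_le_aux hr0 h1
      exact (ENNReal.div_le_iff_le_mul (Or.inl (ℬ.measure_pos A hA).ne')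
        (Or.inl (ℬ.measure_lt_top A hA).ne)).1 h2
    set g : X → ℝ≥0∞ := fun y => (‖f y - ballAvg μ H f‖₊ : ℝ≥0∞) ^ r with hgdef
    set I := ∫⁻ y in H, g y ∂μ with hIdef
    have hIle : I ≤ W ^ r * μ H := hsharp_le H hHmem hBH
    have hIfin : I ≠ ∞ := by
      refine ne_of_lt (lt_of_le_of_lt hIle ?_)
      exact ENNReal.mul_lt_top (ENNReal.rpow_lt_top_of_nonneg hr0.le hWfin) (ℬ.measure_lt_top H hHmem)
    set lam := 2 * (ℬ.K:ℝ≥0∞) * I / μ B with hlamdef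
    -- the key selection of a good point
    obtain ⟨x, hxB, hxgood⟩ : ∃ x ∈ B, ∀ A ∈ ℬ.balls, x ∈ A → μ A ≤ 2 * μ B →
        (∫⁻ y in A, g y ∂μ) ≤ lam * μ A := by
      by_contra hcon
      push_neg at hcon
      set t : Set (Set X) := {A | A ∈ ℬ.balls ∧ μ A ≤ 2 * μ B ∧ (A ∩ B).Nonempty ∧
        lam * μ A < ∫⁻ y in A, g y ∂μ} with htdef
      have htsub : ∀ A ∈ t, A ⊆ H := fun A hA => hstar B hB A hA.1 hA.2.1 hA.2.2.1
      have h2Bfin : 2 * μ B ≠ ∞ := ENNReal.mul_ne_top ENNReal.ofNat_ne_top hBfin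
      obtain ⟨u, hut, hud, hcov⟩ := Vitali.exists_disjoint_subfamily_covering_enlargement
        (id : Set X → Set X) t (fun A => (μ A).toReal) 2 one_lt_two
        (fun A _ => ENNReal.toReal_nonneg) ((2 * μ B).toReal)
        (fun A hA => (ENNReal.toReal_le_toReal (ne_top_of_le_ne_top h2Bfin hA.2.1) h2Bfin).2 hA.2.1)
        (fun A hA => nonempty_of_measure_ne_zero (ℬ.measure_pos A hA.1).ne')
      have hmeas_u : ∀ i : ↥u, MeasurableSet (i : Set X) := fun i =>
        ℬ.measurableSet _ (hut i.2).1
      have hdisj : Pairwise (Function.onFun Disjoint (fun i : ↥u => (i : Set X))) := fun i j hij =>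
        hud i.2 j.2 (Subtype.coe_ne_coe.2 hij)
      have huH : (⋃ i : ↥u, (i : Set X)) ⊆ H := iUnion_subset fun i => htsub _ (hut i.2)
      have hufin : μ (⋃ i : ↥u, (i : Set X)) ≠ ∞ :=
        ne_of_lt (lt_of_le_of_lt (measure_mono huH) (ℬ.measure_lt_top H hHmem))
      have hcnt : Countable ↥u := by
        have h := Measure.countable_meas_pos_of_disjoint_of_meas_iUnion_ne_top μ hmeas_u hdisj hufin
        have he : {i : ↥u | 0 < μ (i : Set X)} = univ :=
          eq_univ_of_forall fun i => ℬ.measure_pos _ (hut i.2).1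
        rw [he, countable_univ_iff] at h
        exact h
      set S := ∑' i : ↥u, μ (i : Set X) with hSdef
      have hcov' : B ⊆ ⋃ i : ↥u, ℬ.hull (i : Set X) := by
        intro z hz
        obtain ⟨A, hA, hzA, hA2, hbad⟩ := hcon z hz
        have hAt : A ∈ t := ⟨hA, hA2, ⟨z, hzA, hz⟩, hbad⟩
        obtain ⟨b, hbu, hABne, hsize⟩ := hcov A hAt
        have hb := hut hbu
        have hAfin' : μ A ≠ ∞ := ne_top_of_le_ne_top h2Bfin hA2
        have hbfin : μ b ≠ ∞ := ne_top_of_le_ne_top h2Bfin hb.2.1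
        have hAb : μ A ≤ 2 * μ b := by
          refine (ENNReal.toReal_le_toReal hAfin' (ENNReal.mul_ne_top ENNReal.ofNat_ne_top hbfin)).1 ?_
          rw [ENNReal.toReal_mul]
          simpa using hsize
        exact mem_iUnion.2 ⟨⟨b, hbu⟩, hstar b hb.1 A hA hAb hABne hzA⟩
      have h1 : μ B ≤ (ℬ.K:ℝ≥0∞) * S := by
        calc μ B ≤ μ (⋃ i : ↥u, ℬ.hull (i : Set X)) := measure_mono hcov'
          _ ≤ ∑' i : ↥u, μ (ℬ.hull (i : Set X)) := measure_iUnion_le _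
          _ ≤ ∑' i : ↥u, (ℬ.K:ℝ≥0∞) * μ (i : Set X) :=
              ENNReal.tsum_le_tsum fun i => ℬ.measure_hull_le _ (hut i.2).1
          _ = (ℬ.K:ℝ≥0∞) * S := ENNReal.tsum_mul_left
      have h2 : lam * S ≤ I := by
        calc lam * S = ∑' i : ↥u, lam * μ (i : Set X) := ENNReal.tsum_mul_left.symm
          _ ≤ ∑' i : ↥u, ∫⁻ y in (i : Set X), g y ∂μ :=
              ENNReal.tsum_le_tsum fun i => (hut i.2).2.2.2.le
          _ = ∫⁻ y in ⋃ i : ↥u, (i : Set X), g y ∂μ := (lintegral_iUnion hmeas_u hdisj g).symm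
          _ ≤ I := lintegral_mono_set huH
      have h3 : 2 * ((ℬ.K:ℝ≥0∞) * I) ≤ (ℬ.K:ℝ≥0∞) * I := by
        calc 2 * ((ℬ.K:ℝ≥0∞) * I) = lam * μ B := by
              rw [hlamdef, ENNReal.div_mul_cancel hB0 hBfin, mul_assoc]
          _ ≤ lam * ((ℬ.K:ℝ≥0∞) * S) := mul_le_mul_right h1 _
          _ = (ℬ.K:ℝ≥0∞) * (lam * S) := by ring
          _ ≤ (ℬ.K:ℝ≥0∞) * I := mul_le_mul_right h2 _
      have hKI : (ℬ.K:ℝ≥0∞) * I ≠ ∞ := ENNReal.mul_ne_top ENNReal.coe_ne_top hIfin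
      have hI0 : I = 0 := by
        have h4 : (ℬ.K:ℝ≥0∞) * I + (ℬ.K:ℝ≥0∞) * I ≤ (ℬ.K:ℝ≥0∞) * I + 0 := by
          rw [add_zero, ← two_mul]; exact h3
        have h5 := (ENNReal.add_le_add_iff_left hKI).1 h4
        have h6 : (ℬ.K:ℝ≥0∞) * I = 0 := le_antisymm h5 zero_le
        rcases mul_eq_zero.1 h6 with h | h
        · exact absurd h (by exact_mod_cast hKpos.ne')
        · exact h
      obtain ⟨z, hz⟩ := nonempty_of_measure_ne_zero hB0
      obtain ⟨A, hA, hzA, hA2, hbad⟩ := hcon z hz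
      have h7 : (∫⁻ y in A, g y ∂μ) ≤ I := lintegral_mono_set (hstar B hB A hA hA2 ⟨z, hzA, hz⟩)
      rw [hI0] at h7
      exact absurd (lt_of_lt_of_le hbad h7) (by simp)
    -- now bound the sharp maximal function at x
    refine le_trans (iInf₂_le x hxB) ?_
    rw [sharpMax]
    refine iSup₂_le fun A hA => ?_
    obtain ⟨hAballs, hxA⟩ := hA
    have hA0 : μ A ≠ 0 := (ℬ.measure_pos A hAballs).ne'
    have hAfin : μ A ≠ ∞ := (ℬ.measure_lt_top A hAballs).ne
    have hfA : IntegrableOn f A μ := hf A hAballs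
    have hCW : ∀ Q : ℝ≥0∞,
        (∫⁻ y in A, (‖f y - ballAvg μ A f‖₊:ℝ≥0∞) ^ r ∂μ) ≤ Q * μ A →
        Q ≤ (C * W) ^ r → sharpAvg μ r f A ≤ C * W := by
      intro Q hQ hQ2
      rw [sharpAvg]
      have hdiv : (∫⁻ y in A, (‖f y - ballAvg μ A f‖₊:ℝ≥0∞) ^ r ∂μ) / μ A ≤ Q :=
        ENNReal.div_le_of_le_mul hQ
      calc ((∫⁻ y in A, (‖f y - ballAvg μ A f‖₊:ℝ≥0∞) ^ r ∂μ) / μ A) ^ (1/r)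
          ≤ Q ^ (1/r) := ENNReal.rpow_le_rpow hdiv (by positivity)
        _ ≤ ((C * W) ^ r) ^ (1/r) := ENNReal.rpow_le_rpow hQ2 (by positivity)
        _ = C * W := by
            rw [← ENNReal.rpow_mul, mul_one_div, div_self hr0.ne', ENNReal.rpow_one]
    have hCr : (C * W) ^ r = 8 ^ r * ((ℬ.K:ℝ≥0∞) ^ 2) ^ r * W ^ r := by
      rw [hC8, ENNReal.mul_rpow_of_nonneg _ _ hr0.le, ENNReal.mul_rpow_of_nonneg _ _ hr0.le]
    have h2pow : ∀ s : ℝ, s ≤ 3 * r → (2:ℝ≥0∞) ^ s ≤ 8 ^ r := by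
      intro s hs
      calc (2:ℝ≥0∞) ^ s ≤ 2 ^ (3 * r) :=
            ENNReal.rpow_le_rpow_of_exponent_le (by norm_num) hs
        _ = 8 ^ r := by
            rw [ENNReal.rpow_mul]
            congr 1
            rw [show (3:ℝ) = ((3:ℕ):ℝ) by norm_num, ENNReal.rpow_natCast]
            norm_num
    have hKsq : ((ℬ.K:ℝ≥0∞) ^ 2) ≤ ((ℬ.K:ℝ≥0∞) ^ 2) ^ r := by
      calc ((ℬ.K:ℝ≥0∞) ^ 2) = ((ℬ.K:ℝ≥0∞) ^ 2) ^ (1:ℝ) := (ENNReal.rpow_one _).symm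
        _ ≤ ((ℬ.K:ℝ≥0∞) ^ 2) ^ r := ENNReal.rpow_le_rpow_of_exponent_le hK2 hr
    by_cases hcase : μ A ≤ 2 * μ B
    · -- small ball case
      have hosc := osc_bound hr hA0 hAfin hfA (ballAvg μ H f)
      have hgA := hxgood A hAballs hxA hcase
      refine hCW (2 ^ (r+1) * lam) ?_ ?_
      · calc (∫⁻ y in A, (‖f y - ballAvg μ A f‖₊:ℝ≥0∞) ^ r ∂μ)
            ≤ 2 ^ (r+1) * ∫⁻ y in A, g y ∂μ := hosc
          _ ≤ 2 ^ (r+1) * (lam * μ A) := mul_le_mul_right hgA _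
          _ = 2 ^ (r+1) * lam * μ A := by ring
      · have hlamle : lam ≤ 2 * (ℬ.K:ℝ≥0∞) ^ 2 * W ^ r := by
          have hI2 : I ≤ W ^ r * ((ℬ.K:ℝ≥0∞) * μ B) :=
            hIle.trans (mul_le_mul_right (ℬ.measure_hull_le B hB) _)
          rw [hlamdef]
          refine ENNReal.div_le_of_le_mul ?_
          calc 2 * (ℬ.K:ℝ≥0∞) * I ≤ 2 * (ℬ.K:ℝ≥0∞) * (W ^ r * ((ℬ.K:ℝ≥0∞) * μ B)) :=
                mul_le_mul_right hI2 _
            _ = 2 * (ℬ.K:ℝ≥0∞) ^ 2 * W ^ r * μ B := by ring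
        have h22 : (2:ℝ≥0∞) ^ (r+1) * 2 ≤ 8 ^ r := by
          have e : (2:ℝ≥0∞) ^ (r+1) * 2 = 2 ^ ((r+1) + (1:ℝ)) := by
            rw [ENNReal.rpow_add (r+1) 1 (by norm_num) ENNReal.ofNat_ne_top, ENNReal.rpow_one]
          rw [e]
          exact h2pow _ (by linarith)
        calc 2 ^ (r+1) * lam ≤ 2 ^ (r+1) * (2 * (ℬ.K:ℝ≥0∞) ^ 2 * W ^ r) :=
              mul_le_mul_right hlamle _
          _ = (2 ^ (r+1) * 2) * ((ℬ.K:ℝ≥0∞) ^ 2) * W ^ r := by ring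
          _ ≤ 8 ^ r * ((ℬ.K:ℝ≥0∞) ^ 2) ^ r * W ^ r := by gcongr
          _ = (C * W) ^ r := hCr.symm
    · -- large ball case
      push_neg at hcase
      have hBA : μ B ≤ 2 * μ A := by
        calc μ B ≤ 2 * μ B := le_mul_of_one_le_left zero_le one_le_two
          _ ≤ μ A := hcase.le
          _ ≤ 2 * μ A := le_mul_of_one_le_left zero_le one_le_two
      set D := ℬ.hull A with hDdef
      have hDmem : D ∈ ℬ.balls := ℬ.hull_mem A hAballs
      have hBD : B ⊆ D := hstar A hAballs B hB hBA ⟨x, hxB, hxA⟩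
      have hAD : A ⊆ D := hself A hAballs
      have hTD := hsharp_le D hDmem hBD
      refine hCW (2 ^ (r+1) * (W ^ r * (ℬ.K:ℝ≥0∞))) ?_ ?_
      · calc (∫⁻ y in A, (‖f y - ballAvg μ A f‖₊:ℝ≥0∞) ^ r ∂μ)
            ≤ 2 ^ (r+1) * ∫⁻ y in A, (‖f y - ballAvg μ D f‖₊:ℝ≥0∞) ^ r ∂μ :=
              osc_bound hr hA0 hAfin hfA _
          _ ≤ 2 ^ (r+1) * ∫⁻ y in D, (‖f y - ballAvg μ D f‖₊:ℝ≥0∞) ^ r ∂μ :=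
              mul_le_mul_right (lintegral_mono_set hAD) _
          _ ≤ 2 ^ (r+1) * (W ^ r * μ D) := mul_le_mul_right hTD _
          _ ≤ 2 ^ (r+1) * (W ^ r * ((ℬ.K:ℝ≥0∞) * μ A)) := by
              have hmA := ℬ.measure_hull_le A hAballs
              gcongr
          _ = 2 ^ (r+1) * (W ^ r * (ℬ.K:ℝ≥0∞)) * μ A := by ring
      · have hKle : (ℬ.K:ℝ≥0∞) ≤ ((ℬ.K:ℝ≥0∞) ^ 2) ^ r := by
          refine le_trans ?_ hKsq
          calc (ℬ.K:ℝ≥0∞) ≤ (ℬ.K:ℝ≥0∞) * (ℬ.K:ℝ≥0∞) :=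
                le_mul_of_one_le_left zero_le hK1
            _ = (ℬ.K:ℝ≥0∞) ^ 2 := (sq _).symm
        have h21 : (2:ℝ≥0∞) ^ (r+1) ≤ 8 ^ r := h2pow _ (by linarith)
        calc 2 ^ (r+1) * (W ^ r * (ℬ.K:ℝ≥0∞))
            = 2 ^ (r+1) * (ℬ.K:ℝ≥0∞) * W ^ r := by ring
          _ ≤ 8 ^ r * ((ℬ.K:ℝ≥0∞) ^ 2) ^ r * W ^ r := by gcongr
          _ = (C * W) ^ r := hCr.symm
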